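/- For every n ≥ 3, Toucher has a strategy in the Toucher-Isolator game on the cycle C_n which guarantees that the number of untouched vertices at the end of the game is at most n/4. In particular, u(C_n) ≤ n/4. -/

import Mathlib

namespace ToucherIsolator

/-- A strategy for a player in the Toucher-Isolator game: given the history of
previously claimed edges (most recent first), it produces the next edge to claim. -/
def Strategy (V : Type*) : Type _ := List (Sym2 V) → Sym2 V

variable {V : Type*}

/-- The number of edges of `G`. -/
noncomputable def edgeCard (G : SimpleGraph V) : ℕ := Nat.card G.edgeSet

/-- `history turn t i n` is the list of the first `n` claimed edges (most recent
first) when the player moving at step `m` is Toucher iff `turn m = true`,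
Toucher plays strategy `t` and Isolator plays strategy `i`. -/
def history (turn : ℕ → Bool) (t i : Strategy V) : ℕ → List (Sym2 V)
  | 0 => []
  | n + 1 =>
      (if turn n then t (history turn t i n) else i (history turn t i n))
        :: history turn t i n

/-- The edge claimed at step `n` of the game. -/
def moveAt (turn : ℕ → Bool) (t i : Strategy V) (n : ℕ) : Sym2 V :=
  if turn n then t (history turn t i n) else i (history turn t i n)

/-- A strategy is legal on `G` if, whenever the history so far consists of
distinct edges of `G` and some edge of `G` is still unclaimed, it claims a
previously unclaimed edge of `G`. -/
def Legal (G : SimpleGraph V) (s : Strategy V) : Prop :=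
  ∀ h : List (Sym2 V), h.Nodup → (∀ e ∈ h, e ∈ G.edgeSet) →
    h.length < edgeCard G → s h ∈ G.edgeSet ∧ s h ∉ h

/-- The set of vertices untouched at the end of the game, i.e. incident to no
edge claimed by Toucher during the `edgeCard G` moves of the game. -/
def untouchedSet (G : SimpleGraph V) (turn : ℕ → Bool) (t i : Strategy V) : Set V :=
  { v | ∀ n < edgeCard G, turn n = true → v ∉ moveAt turn t i n }

/-- The number of untouched vertices at the end of the game. -/
noncomputable def untouchedCount (G : SimpleGraph V) (turn : ℕ → Bool)
    (t i : Strategy V) : ℕ :=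
  Nat.card (untouchedSet G turn t i)

/-- The standard turn order: Toucher moves first and the players alternate. -/
def std (n : ℕ) : Bool := n % 2 = 0

end ToucherIsolator

open ToucherIsolator SimpleGraph

namespace CycleProof

variable (n : ℕ) [NeZero n]

/-- The `j`-th edge of the cycle. -/
def ce (j : Fin n) : Sym2 (Fin n) := s(j, j + 1)

/-- Recover the index of an edge. -/
noncomputable def pidx (f : Sym2 (Fin n)) : Fin n :=
  if h : ∃ j, ce n j = f then h.choose else 0

/-- The partner of edge `j` in the pairing `{e₁,e₂}, {e₃,e₄}, …`. -/
def pfn (j : Fin n) : Fin n := if j.val % 2 = 1 then j + 1 else j - 1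

/-- The edge Toucher would like to claim given the history. -/
noncomputable def desired : List (Sym2 (Fin n)) → Sym2 (Fin n)
  | [] => ce n 0
  | f :: _ => ce n (pfn n (pidx n f))

/-- Some unclaimed edge, if one exists. -/
noncomputable def fallback (h : List (Sym2 (Fin n))) : Sym2 (Fin n) :=
  if hex : ∃ f, f ∈ (cycleGraph n).edgeSet ∧ f ∉ h then hex.choose else ce n 0

open scoped Classical in
/-- Toucher's strategy: first claim edge `e₀`; afterwards, respond to Isolator's
last move by claiming its partner if possible, otherwise claim any free edge. -/
noncomputable def tstrat : Strategy (Fin n) := fun h =>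
  if desired n h ∈ (cycleGraph n).edgeSet ∧ desired n h ∉ h then desired n h
  else fallback n h

open scoped Classical in
lemma tstrat_apply (h : List (Sym2 (Fin n))) :
    tstrat n h =
      if desired n h ∈ (cycleGraph n).edgeSet ∧ desired n h ∉ h then desired n h
      else fallback n h := rfl

section Basic

variable {n}

lemma val_one (hn : 3 ≤ n) : (1 : Fin n).val = 1 := by
  rw [Fin.val_one']; exact Nat.mod_eq_of_lt (by omega)

lemma val_add_one (hn : 3 ≤ n) (j : Fin n) :
    (j + 1).val = if j.val = n - 1 then 0 else j.val + 1 := by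
  rw [Fin.add_def]
  simp only [Fin.val_mk, val_one hn]
  have := j.isLt
  split <;> rename_i h
  · rw [h, Nat.sub_add_cancel (by omega), Nat.mod_self]
  · exact Nat.mod_eq_of_lt (by omega)

lemma val_sub_one (hn : 3 ≤ n) (j : Fin n) :
    (j - 1).val = if j.val = 0 then n - 1 else j.val - 1 := by
  rw [Fin.sub_def]
  simp only [Fin.val_mk, val_one hn]
  have := j.isLt
  split <;> rename_i h
  · rw [h, Nat.add_zero, Nat.mod_eq_of_lt (by omega)]
  · have e : (n - 1) + j.val = n + (j.val - 1) := by omega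
    rw [e, Nat.add_mod_left, Nat.mod_eq_of_lt (by omega)]

lemma ce_mem_edgeSet (hn : 3 ≤ n) (j : Fin n) : ce n j ∈ (cycleGraph n).edgeSet := by
  rw [ce, SimpleGraph.mem_edgeSet, cycleGraph_adj']
  right
  have : j + 1 - j = 1 := by abel
  rw [this, val_one hn]

lemma ce_inj (hn : 3 ≤ n) : Function.Injective (ce n) := by
  intro j k h
  rw [ce, ce, Sym2.eq_iff] at h
  rcases h with ⟨h1, _⟩ | ⟨h1, h2⟩
  · exact h1
  · exfalso
    have hk : k + 1 + 1 = k := by rw [← h1]; exact h2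
    have h3 := val_add_one hn k
    have h4 := val_add_one hn (k + 1)
    have := k.isLt
    have hval : (k + 1 + 1).val = k.val := by rw [hk]
    split_ifs at h3 h4 <;> omega

lemma pidx_ce (hn : 3 ≤ n) (j : Fin n) : pidx n (ce n j) = j := by
  rw [pidx, dif_pos ⟨j, rfl⟩]
  exact ce_inj hn (⟨j, rfl⟩ : ∃ k, ce n k = ce n j).choose_spec

lemma edgeSet_eq (hn : 3 ≤ n) : (cycleGraph n).edgeSet = Set.range (ce n) := by
  ext f
  constructor
  · induction f with
    | _ u v =>
      intro hf
      rw [SimpleGraph.mem_edgeSet, cycleGraph_adj'] at hf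
      rcases hf with h | h
      · refine ⟨v, ?_⟩
        have : u - v = 1 := Fin.ext (by rw [h, val_one hn])
        have hu : u = v + 1 := by rw [← this]; abel
        rw [ce, hu, Sym2.eq_swap]
      · refine ⟨u, ?_⟩
        have : v - u = 1 := Fin.ext (by rw [h, val_one hn])
        have hv : v = u + 1 := by rw [← this]; abel
        rw [ce, hv]
  · rintro ⟨j, rfl⟩; exact ce_mem_edgeSet hn j

lemma edgeCard_eq (hn : 3 ≤ n) : edgeCard (cycleGraph n) = n := by
  rw [edgeCard, edgeSet_eq hn, Nat.card_range_of_injective (ce_inj hn),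
    Nat.card_eq_fintype_card, Fintype.card_fin]

lemma mem_ce (v j : Fin n) : v ∈ ce n j ↔ v = j ∨ v = j + 1 := by
  rw [ce, Sym2.mem_iff]

lemma pfn_val (hn : 3 ≤ n) (j : Fin n) :
    (pfn n j).val = if j.val % 2 = 1 then (if j.val = n - 1 then 0 else j.val + 1)
      else (if j.val = 0 then n - 1 else j.val - 1) := by
  rw [pfn]
  split <;> rename_i h
  · exact val_add_one hn j
  · exact val_sub_one hn j

lemma pfn_ne (hn : 3 ≤ n) (j : Fin n) : pfn n j ≠ j := by
  intro h
  have h1 := pfn_val hn j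
  rw [h] at h1
  have := j.isLt
  split_ifs at h1 <;> omega

lemma pfn_pfn (hn : 3 ≤ n) {j : Fin n} (h0 : j ≠ 0) : pfn n (pfn n j) = j := by
  have h0' : j.val ≠ 0 := by
    intro h; exact h0 (Fin.ext (by rw [h]; rfl))
  apply Fin.ext
  have h1 := pfn_val hn j
  have h2 := pfn_val hn (pfn n j)
  rw [h1] at h2
  have := j.isLt
  split_ifs at h1 h2 <;> first | omega | exact False.elim (by assumption)

lemma pfn_of_odd (hn : 3 ≤ n) {j : Fin n} (h : j.val % 2 = 1) : pfn n j = j + 1 :=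
  if_pos h

end Basic

section Game

variable {n} (hn : 3 ≤ n) (i : Strategy (Fin n)) (hi : Legal (cycleGraph n) i)

/-- Abbreviation for the history of the game. -/
noncomputable def H (m : ℕ) : List (Sym2 (Fin n)) := history std (tstrat n) i m

/-- Abbreviation for the move at step `k`. -/
noncomputable def M (k : ℕ) : Sym2 (Fin n) := moveAt std (tstrat n) i k

lemma H_succ (m : ℕ) : H i (m + 1) = M i m :: H i m := rfl

lemma H_length (m : ℕ) : (H i m).length = m := by
  induction m with
  | zero => rfl
  | succ m ih => rw [H_succ, List.length_cons, ih]

lemma exists_unclaimed (h : List (Sym2 (Fin n))) (hlen : h.length < edgeCard (cycleGraph n)) :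
    ∃ f, f ∈ (cycleGraph n).edgeSet ∧ f ∉ h := by
  classical
  by_contra hc
  push_neg at hc
  have hsub : (cycleGraph n).edgeSet ⊆ (h.toFinset : Set (Sym2 (Fin n))) := by
    intro f hf
    simp only [Finset.coe_sort_coe, Finset.mem_coe, List.mem_toFinset]
    exact hc f hf
  have h1 : edgeCard (cycleGraph n) ≤ h.toFinset.card := by
    rw [edgeCard, Nat.card_coe_set_eq, ← Set.ncard_coe_finset]
    exact Set.ncard_le_ncard hsub (Set.toFinite _)
  have h2 : h.toFinset.card ≤ h.length := List.toFinset_card_le h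
  omega

lemma tstrat_legal : Legal (cycleGraph n) (tstrat n) := by
  intro h hnd hsub hlen
  rw [tstrat_apply]
  split <;> rename_i hd
  · exact hd
  · rw [fallback, dif_pos (exists_unclaimed h hlen)]
    exact (exists_unclaimed h hlen).choose_spec

include hn hi

lemma H_good : ∀ m, m ≤ edgeCard (cycleGraph n) →
    (H i m).Nodup ∧ ∀ f ∈ H i m, f ∈ (cycleGraph n).edgeSet := by
  intro m
  induction m with
  | zero => exact fun _ => ⟨List.nodup_nil, by simp [H, history]⟩
  | succ m ih =>
    intro hm
    obtain ⟨hnd, hsub⟩ := ih (by omega)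
    have hlen : (H i m).length < edgeCard (cycleGraph n) := by rw [H_length]; omega
    have hM : M i m ∈ (cycleGraph n).edgeSet ∧ M i m ∉ H i m := by
      rw [M, moveAt]
      split
      · exact tstrat_legal _ hnd hsub hlen
      · exact hi _ hnd hsub hlen
    rw [H_succ]
    refine ⟨List.nodup_cons.mpr ⟨hM.2, hnd⟩, ?_⟩
    intro f hf
    rcases List.mem_cons.mp hf with rfl | hf
    · exact hM.1
    · exact hsub f hf

lemma M_good : ∀ k < edgeCard (cycleGraph n),
    M i k ∈ (cycleGraph n).edgeSet ∧ M i k ∉ H i k := by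
  intro k hk
  obtain ⟨hnd, hsub⟩ := H_good hn i hi k (by omega)
  have hlen : (H i k).length < edgeCard (cycleGraph n) := by rw [H_length]; omega
  rw [M, moveAt]
  split
  · exact tstrat_legal _ hnd hsub hlen
  · exact hi _ hnd hsub hlen

omit hn hi in
lemma mem_H (m : ℕ) (f : Sym2 (Fin n)) : f ∈ H i m ↔ ∃ k, k < m ∧ M i k = f := by
  induction m with
  | zero => simp [H, history]
  | succ m ih =>
    rw [H_succ, List.mem_cons, ih]
    constructor
    · rintro (rfl | ⟨k, hk, rfl⟩)
      · exact ⟨m, by omega, rfl⟩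
      · exact ⟨k, by omega, rfl⟩
    · rintro ⟨k, hk, rfl⟩
      rcases Nat.lt_succ_iff_lt_or_eq.mp hk with hk | rfl
      · exact Or.inr ⟨k, hk, rfl⟩
      · exact Or.inl rfl

lemma H_full : ∀ f ∈ (cycleGraph n).edgeSet, f ∈ H i (edgeCard (cycleGraph n)) := by
  classical
  set N := edgeCard (cycleGraph n) with hN
  intro f hf
  obtain ⟨hnd, hsub⟩ := H_good hn i hi N le_rfl
  have hfin : (cycleGraph n).edgeSet.Finite := Set.toFinite _
  have hsub2 : (H i N).toFinset ⊆ hfin.toFinset := by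
    intro g hg
    rw [Set.Finite.mem_toFinset]
    exact hsub g (List.mem_toFinset.mp hg)
  have hcard : hfin.toFinset.card ≤ (H i N).toFinset.card := by
    rw [List.toFinset_card_of_nodup hnd, H_length]
    have : N = hfin.toFinset.card := by
      rw [hN, edgeCard, Nat.card_coe_set_eq, Set.ncard_eq_toFinset_card _ hfin]
    omega
  have := Finset.eq_of_subset_of_card_le hsub2 hcard
  rw [← List.mem_toFinset, this, Set.Finite.mem_toFinset]
  exact hf

omit hi in
lemma M_zero : M i 0 = ce n 0 := by
  have h0 : H i 0 = [] := rfl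
  have hstd : std 0 = true := rfl
  rw [M, moveAt, if_pos hstd]
  show tstrat n (H i 0) = ce n 0
  rw [h0, tstrat_apply]
  rw [if_pos ⟨ce_mem_edgeSet hn 0, List.not_mem_nil⟩]
  rfl

/-- The set of edges claimed by Toucher among the first `m` moves. -/
def TouS (m : ℕ) : Set (Sym2 (Fin n)) :=
  {f | ∃ k, k < m ∧ k < edgeCard (cycleGraph n) ∧ std k = true ∧ M i k = f}

/-- The set of edges claimed by Isolator among the first `m` moves. -/
def IsoS (m : ℕ) : Set (Sym2 (Fin n)) :=
  {f | ∃ k, k < m ∧ k < edgeCard (cycleGraph n) ∧ std k = false ∧ M i k = f}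

/-- The key invariant: every edge Isolator has claimed has its partner claimed
by Toucher by the next step, and the partner is never Isolator's. -/
def Inv (m : ℕ) : Prop :=
  ∀ j : Fin n, ce n j ∈ IsoS i m →
    ce n (pfn n j) ∈ TouS i (m + 1) ∧ ce n (pfn n j) ∉ IsoS i m

omit hn hi in
lemma TouS_mono {m m' : ℕ} (h : m ≤ m') : TouS i m ⊆ TouS i m' := by
  rintro f ⟨k, h1, h2, h3, h4⟩
  exact ⟨k, by omega, h2, h3, h4⟩

omit hn hi in
lemma std_zero' : std 0 = true := rfl

omit hn hi in
lemma std_odd {m : ℕ} (h : std m = false) : m % 2 = 1 := by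
  simp [std] at h; omega

omit hn hi in
lemma std_succ_of_odd {m : ℕ} (h : std m = false) : std (m + 1) = true := by
  have := std_odd h
  simp [std]; omega

lemma inv_all : ∀ m, Inv i m := by
  intro m
  induction m with
  | zero =>
    intro j hj
    obtain ⟨k, hk, _⟩ := hj
    omega
  | succ m ih =>
    intro j hj
    obtain ⟨k, hk1, hk2, hk3, hk4⟩ := hj
    rcases Nat.lt_succ_iff_lt_or_eq.mp hk1 with hkm | hkeq
    · -- an edge Isolator already had before step `m`
      obtain ⟨hT, hNI⟩ := ih j ⟨k, hkm, hk2, hk3, hk4⟩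
      refine ⟨TouS_mono i (by omega) hT, ?_⟩
      rintro ⟨k', hk'1, hk'2, hk'3, hk'4⟩
      rcases Nat.lt_succ_iff_lt_or_eq.mp hk'1 with h | hkeq'
      · exact hNI ⟨k', h, hk'2, hk'3, hk'4⟩
      · obtain ⟨k'', h1, h2, h3, h4⟩ := hT
        have hk''m : k'' < m := by
          rcases Nat.lt_succ_iff_lt_or_eq.mp h1 with h | heq
          · exact h
          · rw [heq, ← hkeq'] at h3
            simp [hk'3] at h3
        have hmem : ce n (pfn n j) ∈ H i m := (mem_H i m _).mpr ⟨k'', hk''m, h4⟩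
        have hnot := (M_good hn i hi k' hk'2).2
        rw [hk'4] at hnot
        rw [hkeq'] at hnot
        exact hnot hmem
    · -- the edge Isolator claimed at step `m` itself
      rw [hkeq] at hk2 hk3 hk4
      clear hk1 hkeq
      have hmodd : m % 2 = 1 := std_odd hk3
      have hMnotH : M i m ∉ H i m := (M_good hn i hi m hk2).2
      have hj0 : j ≠ 0 := by
        rintro rfl
        have h0mem : ce n 0 ∈ H i m := (mem_H i m _).mpr ⟨0, by omega, M_zero hn i⟩
        rw [hk4] at hMnotH
        exact hMnotH h0mem
      have hA : ce n (pfn n j) ∉ IsoS i m := by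
        intro hAmem
        obtain ⟨hT', _⟩ := ih (pfn n j) hAmem
        rw [pfn_pfn hn hj0] at hT'
        obtain ⟨k'', h1, h2, h3, h4⟩ := hT'
        have hk''m : k'' < m := by
          rcases Nat.lt_succ_iff_lt_or_eq.mp h1 with h | heq
          · exact h
          · rw [heq] at h3
            simp [hk3] at h3
        have hmem : ce n j ∈ H i m := (mem_H i m _).mpr ⟨k'', hk''m, h4⟩
        rw [← hk4] at hmem
        exact hMnotH hmem
      constructor
      · -- the partner is (or will be) Toucher's
        by_cases hB : ce n (pfn n j) ∈ H i m
        · obtain ⟨k'', hk'', h4⟩ := (mem_H i m _).mp hB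
          cases hstd : std k'' with
          | false => exact absurd ⟨k'', hk'', by omega, hstd, h4⟩ hA
          | true => exact ⟨k'', by omega, by omega, hstd, h4⟩
        · have hne : ce n (pfn n j) ≠ M i m := by
            rw [hk4]
            intro h
            exact pfn_ne hn j (ce_inj hn h)
          have hnotH1 : ce n (pfn n j) ∉ H i (m + 1) := by
            rw [H_succ, List.mem_cons]
            rintro (h | h)
            · exact hne h
            · exact hB h
          have hm1N : m + 1 < edgeCard (cycleGraph n) := by
            rcases Nat.lt_or_ge (m + 1) (edgeCard (cycleGraph n)) with h | h
            · exact h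
            · exfalso
              have hNm : edgeCard (cycleGraph n) = m + 1 := by omega
              have hall : ce n (pfn n j) ∈ H i (edgeCard (cycleGraph n)) :=
                H_full hn i hi _ (ce_mem_edgeSet hn _)
              rw [hNm] at hall
              exact hnotH1 hall
          have hstd1 : std (m + 1) = true := std_succ_of_odd hk3
          have hM1 : M i (m + 1) = ce n (pfn n j) := by
            rw [M, moveAt, if_pos hstd1]
            show tstrat n (H i (m + 1)) = _
            have hcons : H i (m + 1) = M i m :: H i m := H_succ i m
            rw [hcons, tstrat_apply]
            have hd : desired n (M i m :: H i m) = ce n (pfn n j) := by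
              rw [desired, hk4, pidx_ce hn]
            rw [hd, if_pos ⟨ce_mem_edgeSet hn _, by rw [← hcons]; exact hnotH1⟩]
          exact ⟨m + 1, by omega, hm1N, hstd1, hM1⟩
      · -- the partner is not Isolator's
        rintro ⟨k', hk'1, hk'2, hk'3, hk'4⟩
        rcases Nat.lt_succ_iff_lt_or_eq.mp hk'1 with h | heq
        · exact hA ⟨k', h, hk'2, hk'3, hk'4⟩
        · rw [heq, hk4] at hk'4
          exact pfn_ne hn j (ce_inj hn hk'4).symm

end Game

end CycleProof

open CycleProof

/-- Theorem 4 (upper bound): on the cycle `Cₙ`, Toucher can guarantee at most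
`n/4` untouched vertices. -/
theorem toucher_guarantee_cycle
    (n : ℕ) (hn : 3 ≤ n) :
    ∃ t : Strategy (Fin n), Legal (cycleGraph n) t ∧
      ∀ i : Strategy (Fin n), Legal (cycleGraph n) i →
        (untouchedCount (cycleGraph n) std t i : ℝ) ≤ (n : ℝ) / 4 := by
  classical
  haveI : NeZero n := ⟨by omega⟩
  refine ⟨tstrat n, tstrat_legal, ?_⟩
  intro i hi
  set S : Set (Fin n) := untouchedSet (cycleGraph n) std (tstrat n) i with hSdef
  have hNn : edgeCard (cycleGraph n) = n := edgeCard_eq hn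
  have hunt : ∀ v ∈ S, ∀ k < edgeCard (cycleGraph n), std k = true → v ∉ M i k :=
    fun v hv => hv
  -- every edge incident to an untouched vertex belongs to Isolator
  have hedge : ∀ v ∈ S, ∀ j : Fin n, v ∈ ce n j →
      ce n j ∈ IsoS i (edgeCard (cycleGraph n)) := by
    intro v hv j hvj
    have hmem : ce n j ∈ H i (edgeCard (cycleGraph n)) :=
      H_full hn i hi _ (ce_mem_edgeSet hn j)
    obtain ⟨k, hk, hM⟩ := (mem_H i _ _).mp hmem
    cases hstd : std k with
    | false => exact ⟨k, hk, hk, hstd, hM⟩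
    | true => exact absurd (hM ▸ hvj) (hunt v hv k hk hstd)
  -- untouched vertices have value at least 2
  have hv2 : ∀ v ∈ S, 2 ≤ v.val := by
    intro v hv
    have h0 : (0 : ℕ) < edgeCard (cycleGraph n) := by omega
    have hnot := hunt v hv 0 h0 rfl
    rw [M_zero hn i] at hnot
    have hvne : v ≠ 0 ∧ v ≠ 0 + 1 :=
      ⟨fun h => hnot ((mem_ce v 0).mpr (Or.inl h)),
       fun h => hnot ((mem_ce v 0).mpr (Or.inr h))⟩
    have h01 : ((0 : Fin n) + 1).val = 1 := by
      rw [val_add_one hn]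
      have : (0 : Fin n).val = 0 := rfl
      rw [this, if_neg (by omega)]
    have hne0 : v.val ≠ 0 := fun h => hvne.1 (Fin.ext h)
    have hne1 : v.val ≠ 1 := fun h => hvne.2 (Fin.ext (by rw [h, h01]))
    omega
  -- untouched vertices have odd value
  have hodd : ∀ v ∈ S, v.val % 2 = 1 := by
    intro v hv
    by_contra hc
    have hv2' := hv2 v hv
    have hlt := v.isLt
    have huval : (v - 1).val = v.val - 1 := by
      rw [val_sub_one hn, if_neg (by omega)]
    have hu_odd : (v - 1).val % 2 = 1 := by omega
    have hmemu : v ∈ ce n (v - 1) := by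
      rw [mem_ce]
      right
      rw [sub_add_cancel]
    have hIu := hedge v hv (v - 1) hmemu
    have hIv := hedge v hv v ((mem_ce v v).mpr (Or.inl rfl))
    have hinv := (inv_all hn i hi (edgeCard (cycleGraph n)) (v - 1) hIu).2
    rw [pfn_of_odd hn hu_odd, sub_add_cancel] at hinv
    exact hinv hIv
  -- no two untouched vertices at distance 2
  have hpair : ∀ v ∈ S, ∀ w ∈ S, w.val = v.val + 2 → False := by
    intro v hv w hw hvw
    have hvodd := hodd v hv
    have hwlt := w.isLt
    have hvlt := v.isLt
    have hvne : v.val ≠ n - 1 := by omega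
    have hv1 : (v + 1).val = v.val + 1 := by
      rw [val_add_one hn, if_neg hvne]
    have hw1 : w - 1 = v + 1 := by
      apply Fin.ext
      rw [val_sub_one hn, if_neg (by omega), hv1]
      omega
    have hIv := hedge v hv v ((mem_ce v v).mpr (Or.inl rfl))
    have hIw : ce n (w - 1) ∈ IsoS i (edgeCard (cycleGraph n)) := by
      apply hedge w hw (w - 1)
      rw [mem_ce]
      right
      rw [sub_add_cancel]
    have hinv := (inv_all hn i hi (edgeCard (cycleGraph n)) v hIv).2
    rw [pfn_of_odd hn hvodd, ← hw1] at hinv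
    exact hinv hIw
  -- counting
  have hfin : S.Finite := Set.toFinite S
  have hle : S.ncard ≤ n / 4 := by
    rw [Set.ncard_eq_toFinset_card _ hfin]
    have hIcc : (Finset.Icc 1 (n / 4)).card = n / 4 := by rw [Nat.card_Icc]; omega
    rw [← hIcc]
    apply Finset.card_le_card_of_injOn (fun v => (v.val + 1) / 4)
    · intro v hv
      rw [Finset.mem_coe, Set.Finite.mem_toFinset] at hv
      have h2 := hv2 v hv
      have h3 := hodd v hv
      have := v.isLt
      rw [Finset.mem_coe, Finset.mem_Icc]
      dsimp only
      omega
    · intro v hv w hw hEq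
      simp only [Finset.mem_coe, Set.Finite.mem_toFinset] at hv hw
      by_contra hne
      have hvw : v.val ≠ w.val := fun h => hne (Fin.ext h)
      have h1 := hodd v hv
      have h2 := hodd w hw
      have hEq' : (v.val + 1) / 4 = (w.val + 1) / 4 := hEq
      have : w.val = v.val + 2 ∨ v.val = w.val + 2 := by omega
      rcases this with h | h
      · exact hpair v hv w hw h
      · exact hpair w hw v hv h
  have hcount : untouchedCount (cycleGraph n) std (tstrat n) i ≤ n / 4 := by
    rw [untouchedCount, Nat.card_coe_set_eq]
    exact hle
  calc (untouchedCount (cycleGraph n) std (tstrat n) i : ℝ)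
      ≤ ((n / 4 : ℕ) : ℝ) := Nat.cast_le.mpr hcount
    _ ≤ (n : ℝ) / 4 := by
        have := Nat.cast_div_le (α := ℝ) (m := n) (n := 4)
        simpa using this
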